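/- arXiv:0909.2274 — 9 statements merged into one kernel-verified Lean document; each statement's English description precedes it below -/
import Mathlib

section
/- Let w be an infinite word over a totally ordered alphabet and suppose the first n left-shifts of w are pairwise comparable with relative order given by a permutation π of {1,...,n} (i.e., the (i-1)-fold shift of w is lexicographically less than the (j-1)-fold shift iff π(i) < π(j)). If 1 ≤ i, j < n, π(i) < π(j), and π(i+1) > π(j+1), then w_i < w_j. -/
/-- Strict lexicographic order on infinite words. -/
def LexLt {α : Type*} [LinearOrder α] (x y : ℕ → α) : Prop :=
  ∃ k, (∀ i < k, x i = y i) ∧ x k < y k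

/-- `Pat w n π` : the first `n` left shifts of `w` are lexicographically ordered
according to the permutation `π` (0-indexed). -/
def Pat {α : Type*} [LinearOrder α] (w : ℕ → α) (n : ℕ) (π : Equiv.Perm (Fin n)) : Prop :=
  ∀ i j : Fin n, (LexLt (fun m => w (m + i.val)) (fun m => w (m + j.val)) ↔ π i < π j)

theorem stmt0 {α : Type*} [LinearOrder α] {n : ℕ} (w : ℕ → α) (π : Equiv.Perm (Fin n))
    (hPat : Pat w n π) (i j : Fin n) (hi : i.val + 1 < n) (hj : j.val + 1 < n)
    (h1 : π i < π j) (h2 : π ⟨j.val + 1, hj⟩ < π ⟨i.val + 1, hi⟩) :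
    w i.val < w j.val := by
  obtain ⟨k, hagree, hk⟩ := (hPat i j).mpr h1
  rcases Nat.eq_zero_or_pos k with rfl | hkpos
  · simpa using hk
  · -- w i = w j, derive contradiction
    exfalso
    have h0 : w i.val = w j.val := by simpa using hagree 0 hkpos
    have : LexLt (fun m => w (m + (i.val + 1))) (fun m => w (m + (j.val + 1))) := by
      refine ⟨k - 1, fun m hm => ?_, ?_⟩
      · have := hagree (m + 1) (by omega)
        simpa [Nat.add_assoc, Nat.add_comm 1] using this
      · show w ((k-1) + (i.val+1)) < w ((k-1) + (j.val+1))
        have e1 : (k - 1) + (i.val + 1) = k + i.val := by omega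
        have e2 : (k - 1) + (j.val + 1) = k + j.val := by omega
        rw [e1, e2]; exact hk
    have := (hPat ⟨i.val + 1, hi⟩ ⟨j.val + 1, hj⟩).mp this
    exact absurd h2 (not_lt.mpr this.le)
end

section
/- Suppose Pat(w, Σ, n) = π for an infinite word w over a linearly ordered alphabet and π a permutation of {1,...,n}. If 1 ≤ i < k ≤ n and |π(i) − π(k)| = 1, then the finite factor w_i w_{i+1} ... w_{k−1} is a primitive word (not a proper power of a shorter word). -/
/-- A finite word is primitive if it is not an `m`-fold power with `m > 1`. -/
def Primitive {α : Type*} (u : List α) : Prop :=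
  ∀ (q : List α) (m : ℕ), 1 < m → u ≠ (List.replicate m q).flatten

/-- If `x` and `y` agree strictly below `e` and differ at `e`, then
`LexLt x y ↔ x e < y e`. -/
lemma lexLt_iff_of_firstDiff {α : Type*} [LinearOrder α] {x y : ℕ → α} {e : ℕ}
    (hagree : ∀ t < e, x t = y t) (hne : x e ≠ y e) : LexLt x y ↔ x e < y e := by
  constructor
  · rintro ⟨c, hc, hlt⟩
    rcases lt_trichotomy c e with h | h | h
    · exact absurd (hagree c h) hlt.ne
    · exact h ▸ hlt
    · exact absurd (hc e h) hne
  · exact fun h => ⟨e, hagree, h⟩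

theorem stmt1 {α : Type*} [LinearOrder α] {n : ℕ} (w : ℕ → α) (π : Equiv.Perm (Fin n))
    (hPat : Pat w n π) (i k : Fin n) (hik : i < k)
    (hadj : (π i).val + 1 = (π k).val ∨ (π k).val + 1 = (π i).val) :
    Primitive (List.ofFn (fun m : Fin (k.val - i.val) => w (i.val + m.val))) := by
  intro q m hm hu
  set p := q.length with hp
  -- basic length facts
  have hlen : k.val - i.val = m * p := by
    have := congrArg List.length hu
    simpa [Nat.mul_comm] using this
  have hikv : i.val < k.val := hik
  have hp0 : 0 < p := by
    rcases Nat.eq_zero_or_pos p with h | h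
    · rw [h, Nat.mul_zero] at hlen; omega
    · exact h
  -- periodicity of w on the factor
  have hper : ∀ t, t + p < m * p → w (i.val + t) = w (i.val + (t + p)) := by
    intro t ht
    obtain ⟨m', rfl⟩ : ∃ m', m = m' + 1 := ⟨m - 1, by omega⟩
    set v := (List.replicate m' q).flatten with hv
    have hvlen : v.length = m' * p := by simp [hv, Nat.mul_comm, hp]
    have h1 : (List.replicate (m' + 1) q).flatten = q ++ v := by
      simp [List.replicate_succ, hv]
    have h2 : (List.replicate (m' + 1) q).flatten = v ++ q := by
      rw [List.replicate_succ']; simp [hv]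
    have hmul : (m' + 1) * p = m' * p + p := by ring
    have htv : t < v.length := by rw [hvlen]; omega
    have hulen : (List.ofFn (fun m : Fin (k.val - i.val) => w (i.val + m.val))).length
        = k.val - i.val := by simp
    have hlt1 : t < k.val - i.val := by omega
    have hlt2 : t + p < k.val - i.val := by omega
    have e1 : w (i.val + t) = v[t] := by
      have ha := List.getElem_ofFn (f := fun m : Fin (k.val - i.val) => w (i.val + m.val)) (i := t)
        (by rw [hulen]; omega)
      have hb := List.getElem_of_eq (hu.trans h2)
        (show t < (List.ofFn (fun m : Fin (k.val - i.val) => w (i.val + m.val))).length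
          from by rw [hulen]; omega)
      rw [ha] at hb
      rw [hb, List.getElem_append_left htv]
    have e2 : w (i.val + (t + p)) = v[t] := by
      have ha := List.getElem_ofFn (f := fun m : Fin (k.val - i.val) => w (i.val + m.val)) (i := t + p)
        (by rw [hulen]; omega)
      have hb := List.getElem_of_eq (hu.trans h1)
        (show t + p < (List.ofFn (fun m : Fin (k.val - i.val) => w (i.val + m.val))).length
          from by rw [hulen]; omega)
      rw [ha] at hb
      rw [hb, List.getElem_append_right (by omega : q.length ≤ t + p)]
      congr 1
      omega
    rw [e1, e2]
  by_cases hD : ∃ t, w (i.val + t) ≠ w (i.val + (t + p))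
  · -- there is a first difference D
    classical
    set D := Nat.find hD with hDdef
    have hDne : w (i.val + D) ≠ w (i.val + (D + p)) := Nat.find_spec hD
    have hDmin : ∀ t < D, w (i.val + t) = w (i.val + (t + p)) := by
      intro t ht
      by_contra h
      have h2 : D ≤ t := Nat.find_le h
      omega
    have hDbig : m * p ≤ D + p := by
      by_contra h
      exact hDne (hper D (by omega))
    -- the chain of shifts i, i+p, i+2p, ..., i+mp = k
    have hFlt : ∀ a, a ≤ m → i.val + a * p < n := by
      intro a ha
      have : a * p ≤ m * p := Nat.mul_le_mul_right p ha
      have : i.val + a * p ≤ i.val + m * p := by omega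
      have hk : i.val + m * p = k.val := by omega
      have := k.isLt
      omega
    set F : ∀ a : ℕ, a ≤ m → Fin n := fun a ha => ⟨i.val + a * p, hFlt a ha⟩ with hF
    -- comparison of consecutive shifts
    have hstep : ∀ a (ha : a + 1 ≤ m),
        (LexLt (fun t => w (t + (F a (by omega)).val)) (fun t => w (t + (F (a + 1) ha).val))
          ↔ w (i.val + D) < w (i.val + (D + p))) ∧
        (LexLt (fun t => w (t + (F (a + 1) ha).val)) (fun t => w (t + (F a (by omega)).val))
          ↔ w (i.val + (D + p)) < w (i.val + D)) := by
      intro a ha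
      have hap : a * p ≤ D := by
        have h1 : a * p ≤ (m - 1) * p := Nat.mul_le_mul_right p (by omega)
        have h2 : (m - 1) * p = m * p - p := by rw [Nat.sub_mul, one_mul]
        omega
      have hagree : ∀ t < D - a * p,
          w (t + (F a (by omega : a ≤ m)).val) = w (t + (F (a + 1) ha).val) := by
        intro t ht
        have hmul : (a + 1) * p = a * p + p := by ring
        have h1 : t + (F a (by omega : a ≤ m)).val = i.val + (t + a * p) := by
          simp only [hF]; omega
        have h2 : t + (F (a + 1) ha).val = i.val + ((t + a * p) + p) := by
          simp only [hF]; omega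
        rw [h1, h2]
        exact hDmin (t + a * p) (by omega)
      have hmul : (a + 1) * p = a * p + p := by ring
      have hv1 : (D - a * p) + (F a (by omega : a ≤ m)).val = i.val + D := by
        simp only [hF]; omega
      have hv2 : (D - a * p) + (F (a + 1) ha).val = i.val + (D + p) := by
        simp only [hF]; omega
      have hne' : w ((D - a * p) + (F a (by omega : a ≤ m)).val)
          ≠ w ((D - a * p) + (F (a + 1) ha).val) := by rw [hv1, hv2]; exact hDne
      constructor
      · rw [lexLt_iff_of_firstDiff hagree hne', hv1, hv2]
      · rw [lexLt_iff_of_firstDiff (fun t ht => (hagree t ht).symm) (Ne.symm hne'), hv1, hv2]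
    have hF0 : F 0 (by omega) = i := by simp [hF]
    have hFm : F m (le_refl m) = k := by
      have : i.val + m * p = k.val := by omega
      simp [hF, this]
    -- case on the sign of the first difference
    rcases lt_or_gt_of_ne hDne with hsign | hsign
    · -- increasing chain
      have hchain : ∀ a (ha : a + 1 ≤ m), π (F a (by omega)) < π (F (a + 1) ha) := by
        intro a ha
        exact (hPat _ _).mp (((hstep a ha).1).mpr hsign)
      have hmono : ∀ b (hb : b ≤ m), ∀ a (hab : a < b), π (F a (by omega)) < π (F b hb) := by
        intro b
        induction b with
        | zero => intro _ a h; omega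
        | succ b ih =>
          intro hb a hab
          rcases Nat.lt_or_ge a b with h | h
          · exact lt_trans (ih (by omega) a h) (hchain b hb)
          · have : a = b := by omega
            subst this
            exact hchain a hb
      have h1 : π i < π (F 1 (by omega)) := by
        have := hmono 1 (by omega) 0 (by omega); rwa [hF0] at this
      have h2 : π (F 1 (by omega)) < π k := by
        have := hmono m (le_refl m) 1 (by omega); rwa [hFm] at this
      rcases hadj with h | h
      · have := Fin.lt_iff_val_lt_val.mp h1
        have := Fin.lt_iff_val_lt_val.mp h2
        omega
      · have := Fin.lt_iff_val_lt_val.mp (h1.trans h2)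
        omega
    · -- decreasing chain
      have hchain : ∀ a (ha : a + 1 ≤ m), π (F (a + 1) ha) < π (F a (by omega)) := by
        intro a ha
        exact (hPat _ _).mp (((hstep a ha).2).mpr hsign)
      have hmono : ∀ b (hb : b ≤ m), ∀ a (hab : a < b), π (F b hb) < π (F a (by omega)) := by
        intro b
        induction b with
        | zero => intro _ a h; omega
        | succ b ih =>
          intro hb a hab
          rcases Nat.lt_or_ge a b with h | h
          · exact lt_trans (hchain b hb) (ih (by omega) a h)
          · have : a = b := by omega
            subst this
            exact hchain a hb
      have h1 : π (F 1 (by omega)) < π i := by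
        have := hmono 1 (by omega) 0 (by omega); rwa [hF0] at this
      have h2 : π k < π (F 1 (by omega)) := by
        have := hmono m (le_refl m) 1 (by omega); rwa [hFm] at this
      rcases hadj with h | h
      · have := Fin.lt_iff_val_lt_val.mp (h2.trans h1)
        omega
      · have := Fin.lt_iff_val_lt_val.mp h1
        have := Fin.lt_iff_val_lt_val.mp h2
        omega
  · -- fully periodic: the shifts at i and k coincide, contradiction
    push_neg at hD
    have hshift : ∀ a t, w (i.val + t) = w (i.val + (t + a * p)) := by
      intro a
      induction a with
      | zero => simp
      | succ a ih =>
        intro t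
        rw [ih t]
        have := hD (t + a * p)
        have harg : t + (a + 1) * p = (t + a * p) + p := by ring
        rw [harg]
        exact this
    have heq : ∀ t, w (t + i.val) = w (t + k.val) := by
      intro t
      have h1 : t + i.val = i.val + t := by omega
      have h2 : t + k.val = i.val + (t + m * p) := by omega
      rw [h1, h2]
      exact hshift m t
    have h1 : ¬ π i < π k := by
      rw [← hPat i k]
      rintro ⟨c, _, hlt⟩
      exact absurd (heq c) hlt.ne
    have h2 : ¬ π k < π i := by
      rw [← hPat k i]
      rintro ⟨c, _, hlt⟩
      exact absurd (heq c).symm hlt.ne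
    have : π i = π k := le_antisymm (not_lt.mp h2) (not_lt.mp h1)
    have : i = k := π.injective this
    exact absurd this (Fin.ne_of_lt hik)
end

section
/- Suppose Pat(w, Σ, n) = π, and a ∈ {1, ..., n−1} is such that, setting i = π⁻¹(a) and j = π⁻¹(a+1), both i < n and j < n and π(i+1) > π(j+1). Then w_{π⁻¹(a)} < w_{π⁻¹(a+1)} strictly. -/
/-- Each `a ∈ A(π)` forces a strict inequality `w_{π⁻¹(a)} < w_{π⁻¹(a+1)}`. -/
theorem stmt4 {α : Type*} [LinearOrder α] {n : ℕ} (w : ℕ → α) (π : Equiv.Perm (Fin n))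
    (hPat : Pat w n π) (a : Fin n) (ha : a.val + 1 < n)
    (hi : (π.symm a).val + 1 < n) (hj : (π.symm ⟨a.val + 1, ha⟩).val + 1 < n)
    (hd : π ⟨(π.symm ⟨a.val + 1, ha⟩).val + 1, hj⟩ < π ⟨(π.symm a).val + 1, hi⟩) :
    w (π.symm a).val < w (π.symm ⟨a.val + 1, ha⟩).val := by
  set i := π.symm a with hidef
  set j := π.symm ⟨a.val + 1, ha⟩ with hjdef
  have hlt : π i < π j := by
    rw [hidef, hjdef, Equiv.apply_symm_apply, Equiv.apply_symm_apply]
    exact Fin.lt_def.mpr (Nat.lt_succ_self _)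
  obtain ⟨k, hpre, hk⟩ := (hPat i j).mpr hlt
  match k with
  | 0 => simpa using hk
  | m + 1 =>
    exfalso
    have : LexLt (fun l => w (l + (i.val + 1))) (fun l => w (l + (j.val + 1))) := by
      refine ⟨m, fun l hl => ?_, ?_⟩
      · have := hpre (l + 1) (by omega)
        simpa [Nat.add_assoc, Nat.add_comm 1] using this
      · simpa [Nat.add_assoc, Nat.add_comm 1] using hk
    have h2 := (hPat ⟨i.val + 1, hi⟩ ⟨j.val + 1, hj⟩).mp this
    exact absurd h2 (not_lt.mpr hd.le)
end

section
/- Let N(π) be the least N such that π is realized by the shift on N symbols (i.e., there is an infinite word w over {0,...,N−1} with Pat(w, Σ, n) = π). For every permutation π of {1,...,n} with n ≥ 3, N(π) ≤ n − 1. -/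
/-- `N(π)`: the least alphabet size `N` such that `π` is realized by the shift on `N` symbols. -/
noncomputable def minN {n : ℕ} (π : Equiv.Perm (Fin n)) : ℕ :=
  sInf {N | ∃ w : ℕ → ℕ, (∀ i, w i < N) ∧ Pat w n π}

lemma lexLt_iff_of_ne0 {x y : ℕ → ℕ} (h : x 0 ≠ y 0) : LexLt x y ↔ x 0 < y 0 := by
  constructor
  · rintro ⟨k, h1, h2⟩
    rcases Nat.eq_zero_or_pos k with rfl | hk
    · exact h2
    · exact absurd (h1 0 hk) h
  · exact fun h2 => ⟨0, by omega, h2⟩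

lemma lexLt_iff_of_eq0 {x y : ℕ → ℕ} (h0 : x 0 = y 0) (h1 : x 1 ≠ y 1) :
    LexLt x y ↔ x 1 < y 1 := by
  constructor
  · rintro ⟨k, hk1, hk2⟩
    match k with
    | 0 => omega
    | 1 => exact hk2
    | (m+2) => exact absurd (hk1 1 (by omega)) h1
  · exact fun h2 => ⟨1, by intro i hi; interval_cases i; exact h0, h2⟩

lemma not_lexLt_self (x : ℕ → ℕ) : ¬ LexLt x x := by
  rintro ⟨k, _, h2⟩; exact lt_irrefl _ h2

/-- For `n ≥ 3`, every permutation of length `n` is realized on `n - 1` symbols. -/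
theorem stmt6 {n : ℕ} (hn : 3 ≤ n) (π : Equiv.Perm (Fin n)) : minN π ≤ n - 1 := by
  have hpos : 0 < n := by omega
  -- the rotation
  set ρ : Fin n → Fin n := fun i => ⟨(i.val + 1) % n, Nat.mod_lt _ hpos⟩ with hρdef
  have hmod : ∀ x, x < n → (x + 1) % n = if x + 1 = n then 0 else x + 1 := by
    intro x hx
    split
    · next h => rw [h, Nat.mod_self]
    · next h => exact Nat.mod_eq_of_lt (by omega)
  have hρinj : Function.Injective ρ := by
    rintro ⟨u, hu⟩ ⟨v, hv⟩ h
    have h' : (u + 1) % n = (v + 1) % n := congrArg Fin.val h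
    rw [hmod u hu, hmod v hv] at h'
    apply Fin.ext
    simp only
    split at h' <;> split at h' <;> omega
  have hρne : ∀ x : Fin n, ρ x ≠ x := by
    rintro ⟨x, hx⟩ h
    have h' : (x + 1) % n = x := congrArg Fin.val h
    rw [hmod x hx] at h'
    split at h' <;> omega
  have hρρne : ∀ x : Fin n, ρ (ρ x) ≠ x := by
    rintro ⟨x, hx⟩ h
    have h' : ((x + 1) % n + 1) % n = x := congrArg Fin.val h
    rw [hmod x hx] at h'
    split at h'
    · rw [hmod 0 hpos] at h'
      split at h' <;> omega
    · rw [hmod (x+1) (by omega)] at h'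
      split at h' <;> omega
  -- the conjugated rotation
  set f : Fin n → Fin n := fun v => π (ρ (π⁻¹ v)) with hfdef
  have hfinj : Function.Injective f := by
    intro u v h
    have := hρinj (π.injective h)
    exact π⁻¹.injective this
  -- Step 1: find a with f ⟨a⟩ < f ⟨a+1⟩
  have step1 : ∃ a : ℕ, ∃ h : a + 1 < n,
      f ⟨a, by omega⟩ < f ⟨a + 1, h⟩ := by
    by_contra hcon
    push_neg at hcon
    have H : ∀ a : ℕ, ∀ h : a + 1 < n, f ⟨a + 1, h⟩ < f ⟨a, by omega⟩ := by
      intro a h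
      rcases lt_or_eq_of_le (hcon a h) with h' | h'
      · exact h'
      · exfalso
        have := hfinj h'
        have := congrArg Fin.val this
        simp at this
    have hub : ∀ a : ℕ, ∀ h : a < n, (f ⟨a, h⟩).val ≤ n - 1 - a := by
      intro a
      induction a with
      | zero => intro h; have := (f ⟨0, h⟩).isLt; omega
      | succ a ih =>
        intro h
        have h1 := H a h
        rw [Fin.lt_def] at h1
        have h2 := ih (by omega)
        omega
    have hlb : ∀ d a : ℕ, ∀ h : a < n, a + d = n - 1 → d ≤ (f ⟨a, h⟩).val := by
      intro d
      induction d with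
      | zero => intro a h _; omega
      | succ d ih =>
        intro a h hd
        have h1 : a + 1 < n := by omega
        have h2 := ih (a + 1) h1 (by omega)
        have h3 := H a h1
        rw [Fin.lt_def] at h3
        omega
    have hEq : ∀ a : ℕ, ∀ h : a < n, (f ⟨a, h⟩).val = n - 1 - a := by
      intro a h
      have := hub a h
      have := hlb (n - 1 - a) a h (by omega)
      omega
    -- f ⟨0⟩ = ⟨n-1⟩ and f ⟨n-1⟩ = ⟨0⟩, so ρ∘ρ has a fixed point
    have e1 : f ⟨0, hpos⟩ = ⟨n - 1, by omega⟩ := by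
      apply Fin.ext; rw [hEq 0 hpos]; simp
    have e2 : f ⟨n - 1, by omega⟩ = ⟨0, hpos⟩ := by
      apply Fin.ext; rw [hEq (n-1) (by omega)]; simp
    have r1 : ρ (π⁻¹ ⟨0, hpos⟩) = π⁻¹ ⟨n - 1, by omega⟩ := by
      have := congrArg (fun z => π⁻¹ z) e1
      simpa [hfdef, Equiv.Perm.inv_def] using this
    have r2 : ρ (π⁻¹ ⟨n - 1, by omega⟩) = π⁻¹ ⟨0, hpos⟩ := by
      have := congrArg (fun z => π⁻¹ z) e2
      simpa [hfdef, Equiv.Perm.inv_def] using this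
    exact hρρne (π⁻¹ ⟨0, hpos⟩) (by rw [r1, r2])
  obtain ⟨a, ha, hlt⟩ := step1
  set A : Fin n := ⟨a, by omega⟩ with hAdef
  set B : Fin n := ⟨a + 1, ha⟩ with hBdef
  -- merged letters
  set ℓ : Fin n → ℕ := fun v => if v.val ≤ a then v.val else v.val - 1 with hℓdef
  have hℓlt : ∀ u v : Fin n, ℓ u ≠ ℓ v → (ℓ u < ℓ v ↔ u < v) := by
    rintro ⟨u, hu⟩ ⟨v, hv⟩ hne
    simp only [hℓdef, Fin.lt_def] at *
    split_ifs at * <;> omega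
  have hℓeq : ∀ u v : Fin n, u ≠ v → ℓ u = ℓ v →
      (u = A ∧ v = B) ∨ (u = B ∧ v = A) := by
    rintro ⟨u, hu⟩ ⟨v, hv⟩ hne heq
    have hne' : u ≠ v := fun h => hne (Fin.ext h)
    simp only [hℓdef] at heq
    split_ifs at heq <;>
      [ omega;
        (left; constructor <;> apply Fin.ext <;> simp [hAdef, hBdef] <;> omega);
        (right; constructor <;> apply Fin.ext <;> simp [hAdef, hBdef] <;> omega);
        omega ]
  -- the word
  set w : ℕ → ℕ := fun m => ℓ (π ⟨m % n, Nat.mod_lt _ hpos⟩) with hwdef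
  have hwlt : ∀ m, w m < n - 1 := by
    intro m
    simp only [hwdef, hℓdef]
    have := (π ⟨m % n, Nat.mod_lt _ hpos⟩).isLt
    split <;> omega
  -- value of the word at position k + i
  have hw0 : ∀ i : Fin n, w (0 + i.val) = ℓ (π i) := by
    intro i
    simp only [hwdef, Nat.zero_add]
    congr 2
    exact Fin.ext (Nat.mod_eq_of_lt i.isLt)
  have hw1 : ∀ i : Fin n, w (1 + i.val) = ℓ (π (ρ i)) := by
    intro i
    simp only [hwdef, hρdef]
    congr 2
    exact Fin.ext (by simp [Nat.add_comm])
  apply Nat.sInf_le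
  refine ⟨w, hwlt, ?_⟩
  intro i j
  by_cases hij : i = j
  · subst hij
    simp [not_lexLt_self, lt_irrefl]
  · by_cases he : ℓ (π i) = ℓ (π j)
    · -- merged pair: decided at position 1
      have hπne : π i ≠ π j := fun h => hij (π.injective h)
      have hcase := hℓeq _ _ hπne he
      have hx1ne : ℓ (π (ρ i)) ≠ ℓ (π (ρ j)) := by
        intro h1
        by_cases hρπ : π (ρ i) = π (ρ j)
        · exact hij (hρinj (π.injective hρπ))
        · have hcase2 := hℓeq _ _ hρπ h1
          rcases hcase with ⟨hi1, hj1⟩ | ⟨hi1, hj1⟩ <;>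
            rcases hcase2 with ⟨hi2, hj2⟩ | ⟨hi2, hj2⟩
          · exact hρne i (π.injective (hi2.trans hi1.symm))
          · -- π(ρi)=B=πj, π(ρj)=A=πi : ρ i = j, ρ j = i
            have e1 : ρ i = j := π.injective (hi2.trans hj1.symm)
            have e2 : ρ j = i := π.injective (hj2.trans hi1.symm)
            exact hρρne i (by rw [e1, e2])
          · have e1 : ρ i = j := π.injective (hi2.trans hj1.symm)
            have e2 : ρ j = i := π.injective (hj2.trans hi1.symm)
            exact hρρne i (by rw [e1, e2])
          · exact hρne i (π.injective (hi2.trans hi1.symm))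
      rw [lexLt_iff_of_eq0 (by rw [hw0 i, hw0 j, he]) (by rw [hw1 i, hw1 j]; exact hx1ne)]
      rw [hw1 i, hw1 j, hℓlt _ _ hx1ne]
      -- now: π (ρ i) < π (ρ j) ↔ π i < π j
      have hAB : A < B := by simp [hAdef, hBdef, Fin.lt_def]
      rcases hcase with ⟨hi1, hj1⟩ | ⟨hi1, hj1⟩
      · -- π i = A, π j = B: both sides should be true
        have hiA : π⁻¹ A = i := by rw [← hi1]; exact π.symm_apply_apply i
        have hjB : π⁻¹ B = j := by rw [← hj1]; exact π.symm_apply_apply j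
        have : f A < f B := hlt
        rw [hfdef] at this
        simp only [hiA, hjB] at this
        constructor
        · intro _; rw [hi1, hj1]; exact hAB
        · intro _; exact this
      · -- π i = B, π j = A: both sides false
        have hiB : π⁻¹ B = i := by rw [← hi1]; exact π.symm_apply_apply i
        have hjA : π⁻¹ A = j := by rw [← hj1]; exact π.symm_apply_apply j
        have hfab : f A < f B := hlt
        rw [hfdef] at hfab
        simp only [hiB, hjA] at hfab
        constructor
        · intro h; exact absurd hfab (not_lt_of_gt h)
        · intro h; rw [hi1, hj1] at h; exact absurd hAB (not_lt_of_gt h)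
    · rw [lexLt_iff_of_ne0 (by rw [hw0 i, hw0 j]; exact he)]
      rw [hw0 i, hw0 j, hℓlt _ _ he]
end

section
/- For every n ≥ 2 and N ≥ 2, the number a_{n,N} of permutations π ∈ S_n with N(π) = N is even. -/
-- complement of π
def comp {n : ℕ} (π : Equiv.Perm (Fin n)) : Equiv.Perm (Fin n) := π.trans Fin.revPerm

lemma comp_comp {n : ℕ} (π : Equiv.Perm (Fin n)) : comp (comp π) = π := by
  ext i
  simp [comp, Fin.rev_rev]

lemma lexlt_compl {M : ℕ} (w : ℕ → ℕ) (hw : ∀ i, w i < M) (a b : ℕ) :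
    LexLt (fun m => (M - 1 - w (m + a))) (fun m => (M - 1 - w (m + b))) ↔
      LexLt (fun m => w (m + b)) (fun m => w (m + a)) := by
  constructor
  · rintro ⟨k, hpre, hk⟩
    simp only at hpre hk
    refine ⟨k, fun i hi => ?_, ?_⟩
    · have := hpre i hi
      have h1 := hw (i + a); have h2 := hw (i + b); simp only; omega
    · have h1 := hw (k + a); have h2 := hw (k + b); simp only; omega
  · rintro ⟨k, hpre, hk⟩
    simp only at hpre hk
    refine ⟨k, fun i hi => ?_, ?_⟩
    · have := hpre i hi; simp only; omega
    · have h1 := hw (k + a); have h2 := hw (k + b); simp only; omega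

lemma pat_compl {n M : ℕ} (π : Equiv.Perm (Fin n)) (w : ℕ → ℕ) (hw : ∀ i, w i < M)
    (h : Pat w n π) : Pat (fun m => M - 1 - w m) n (comp π) := by
  intro i j
  rw [lexlt_compl w hw i.val j.val, h j i]
  simp [comp, Fin.rev_lt_rev]

lemma minN_comp {n : ℕ} (π : Equiv.Perm (Fin n)) : minN (comp π) = minN π := by
  have key : ∀ σ : Equiv.Perm (Fin n), ∀ M : ℕ,
      (∃ w : ℕ → ℕ, (∀ i, w i < M) ∧ Pat w n σ) →
      (∃ w : ℕ → ℕ, (∀ i, w i < M) ∧ Pat w n (comp σ)) := by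
    rintro σ M ⟨w, hw, hp⟩
    exact ⟨fun m => M - 1 - w m, fun i => by have := hw i; simp only; omega, pat_compl σ w hw hp⟩
  unfold minN
  congr 1
  ext M
  constructor
  · intro h
    have := key (comp π) M h
    rwa [comp_comp] at this
  · exact key π M

/-- The numbers `a_{n,N} = |{π ∈ S_n : N(π) = N}|` are even. -/
theorem stmt11 {n N : ℕ} (hn : 2 ≤ n) (hN : 2 ≤ N) :
    Even (Nat.card {π : Equiv.Perm (Fin n) // minN π = N}) := by
  classical
  let f : Function.End {π : Equiv.Perm (Fin n) // minN π = N} :=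
    fun x => ⟨comp x.1, by rw [minN_comp]; exact x.2⟩
  have hf2 : f ^ 2 ^ 1 = 1 := by
    rw [pow_one, sq]
    funext x
    exact Subtype.ext (comp_comp x.1)
  have hmod := Equiv.Perm.card_fixedPoints_modEq (p := 2) (n := 1) hf2
  have hempty : IsEmpty f.fixedPoints := by
    constructor
    rintro ⟨⟨π, hπ⟩, hfix⟩
    have h1 : comp π = π := congrArg Subtype.val hfix
    have hz : 0 < n := by omega
    set z : Fin n := ⟨0, hz⟩ with hzdef
    have h2' : comp π (π.symm z) = π (π.symm z) := by rw [h1]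
    have h2 : Fin.rev (π (π.symm z)) = π (π.symm z) := h2'
    rw [Equiv.apply_symm_apply] at h2
    have h3 := Fin.val_eq_of_eq h2
    simp [Fin.rev, hzdef] at h3
    omega
  rw [Fintype.card_eq_zero_iff.mpr hempty] at hmod
  rw [Nat.card_eq_fintype_card]
  exact (Nat.even_iff.mpr (by simpa [Nat.ModEq] using hmod))
end

section
/- Let w = u p^{n−1} 0^∞ where u has length k−1, p has length n−k with 1 ≤ k ≤ n−1, and p is primitive. If π = Pat(w, Σ, n) is defined, then π(n) = π(k) − 1. -/
/-- The infinite word `u p^{n-1} 0^∞`. -/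
def wordOf (u p : List ℕ) (n : ℕ) : ℕ → ℕ :=
  fun m => (u ++ (List.replicate (n - 1) p).flatten).getD m 0

section Aux

lemma lexLt_not_of_eq {x y : ℕ → ℕ} (h : ∀ m, x m = y m) : ¬ LexLt x y := by
  rintro ⟨m, -, hm⟩
  rw [h m] at hm
  exact lt_irrefl _ hm

lemma lexLt_asymm {x y : ℕ → ℕ} (h1 : LexLt x y) (h2 : LexLt y x) : False := by
  obtain ⟨m1, ha1, hb1⟩ := h1
  obtain ⟨m2, ha2, hb2⟩ := h2
  rcases lt_trichotomy m1 m2 with h | h | h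
  · exact hb1.ne' (ha2 m1 h)
  · subst h; exact absurd hb2 (not_lt.2 hb1.le)
  · exact hb2.ne' (ha1 m2 h)

lemma lexLt_sandwich {x y z : ℕ → ℕ} (h1 : LexLt x z) (h2 : LexLt z y) {M : ℕ}
    (hxy : ∀ i, i < M → x i = y i) : ∀ i, i < M → z i = x i := by
  obtain ⟨m1, ha1, hb1⟩ := h1
  obtain ⟨m2, ha2, hb2⟩ := h2
  have hM : M ≤ m1 := by
    by_contra hc
    push_neg at hc
    rcases lt_trichotomy m1 m2 with h | h | h
    · exact hb1.ne' ((ha2 m1 h).trans (hxy m1 hc).symm)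
    · subst h
      exact absurd (hb1.trans hb2) (by rw [hxy m1 hc]; exact lt_irrefl _)
    · exact hb2.ne ((ha1 m2 h).symm.trans (hxy m2 (h.trans hc)))
  intro i hi
  exact (ha1 i (lt_of_lt_of_le hi hM)).symm

lemma period_mul {f : ℕ → ℕ} {d : ℕ} (h : ∀ i, f (i + d) = f i) :
    ∀ c i, f (i + c * d) = f i := by
  intro c
  induction c with
  | zero => simp
  | succ c ih =>
    intro i
    have e : i + (c + 1) * d = (i + c * d) + d := by ring
    rw [e, h, ih]

lemma period_gcd {f : ℕ → ℕ} :
    ∀ s L, (∀ i, f (i + s) = f i) → (∀ i, f (i + L) = f i) →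
      ∀ i, f (i + Nat.gcd s L) = f i := by
  intro s
  induction s using Nat.strong_induction_on with
  | _ s ih =>
    intro L hs hL i
    rcases Nat.eq_zero_or_pos s with rfl | hpos
    · simpa [Nat.gcd_zero_left] using hL i
    · have h1 : ∀ j, f (j + L % s) = f j := by
        intro j
        have e : j + L % s + s * (L / s) = j + L := by
          rw [Nat.add_assoc, Nat.mod_add_div]
        have h2 := period_mul (d := s) hs (L / s) (j + L % s)
        rw [Nat.mul_comm] at e
        rw [e] at h2
        rw [← h2, hL]
      have h3 := ih (L % s) (Nat.mod_lt _ hpos) s h1 hs i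
      rw [Nat.gcd_rec s L]
      exact h3

lemma flat_replicate_length (q : List ℕ) :
    ∀ c, ((List.replicate c q).flatten).length = c * q.length := by
  intro c
  induction c with
  | zero => simp
  | succ c ih =>
    rw [List.replicate_succ, List.flatten_cons, List.length_append, ih]
    ring

lemma flat_replicate_getD (q : List ℕ) : ∀ c i, ((List.replicate c q).flatten).getD i 0 =
    if i < c * q.length then q.getD (i % q.length) 0 else 0 := by
  intro c
  induction c with
  | zero => simp
  | succ c ih =>
    intro i
    rw [List.replicate_succ, List.flatten_cons]
    rcases lt_or_ge i q.length with h | h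
    · rw [List.getD_append _ _ _ _ h, Nat.mod_eq_of_lt h]
      have hlt : i < (c + 1) * q.length := by
        have := Nat.le_mul_of_pos_left q.length (show 0 < c + 1 by omega)
        omega
      rw [if_pos hlt]
    · rw [List.getD_append_right _ _ _ _ h, ih]
      have hm : i % q.length = (i - q.length) % q.length := Nat.mod_eq_sub_mod h
      have he : (c + 1) * q.length = c * q.length + q.length := by ring
      rcases lt_or_ge (i - q.length) (c * q.length) with h2 | h2
      · rw [if_pos h2, if_pos (by omega), hm]
      · rw [if_neg (by omega), if_neg (by omega)]

lemma list_ext_getD {a b : List ℕ} (hl : a.length = b.length)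
    (h : ∀ i, i < a.length → a.getD i 0 = b.getD i 0) : a = b := by
  apply List.ext_getElem hl
  intro i h1 h2
  rw [← List.getD_eq_getElem a 0 h1, ← List.getD_eq_getElem b 0 h2]
  exact h i h1

lemma not_primitive_of_shift (p : List ℕ) (s : ℕ) (hs : 0 < s) (hsL : s < p.length)
    (h : ∀ m, m < p.length → p.getD ((m + s) % p.length) 0 = p.getD (m % p.length) 0) :
    ¬ Primitive p := by
  set L := p.length with hL
  have hLpos : 0 < L := by omega
  set pw : ℕ → ℕ := fun i => p.getD (i % L) 0 with hpw
  have hpwL : ∀ i, pw (i + L) = pw i := by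
    intro i; simp [hpw, Nat.add_mod_right]
  have hpws : ∀ i, pw (i + s) = pw i := by
    intro i
    have h1 : (i + s) % L = (i % L + s) % L := by
      conv_lhs => rw [Nat.add_mod, Nat.mod_eq_of_lt hsL]
    have hmm : i % L % L = i % L := Nat.mod_eq_of_lt (Nat.mod_lt _ hLpos)
    have h2 := h (i % L) (Nat.mod_lt _ hLpos)
    rw [hmm] at h2
    show p.getD ((i + s) % L) 0 = p.getD (i % L) 0
    rw [h1]
    exact h2
  set g := Nat.gcd s L with hg
  have hgpos : 0 < g := Nat.gcd_pos_of_pos_left _ hs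
  have hgdvd : g ∣ L := Nat.gcd_dvd_right _ _
  have hglt : g < L := lt_of_le_of_lt (Nat.le_of_dvd hs (Nat.gcd_dvd_left _ _)) hsL
  have hpwg : ∀ i, pw (i + g) = pw i := period_gcd s L hpws hpwL
  intro hprim
  have hdivL : L / g * g = L := Nat.div_mul_cancel hgdvd
  have hm2 : 1 < L / g := by
    by_contra hc
    push_neg at hc
    interval_cases h' : L / g <;> omega
  apply hprim (p.take g) (L / g) hm2
  have hlen : (p.take g).length = g := by
    rw [List.length_take]; omega
  apply list_ext_getD
  · rw [flat_replicate_length, hlen, hdivL]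
  · intro i hi
    have hiL : i < L := hi
    rw [flat_replicate_getD, hlen, hdivL, if_pos hiL]
    have h1 : (p.take g).getD (i % g) 0 = p.getD (i % g) 0 := by
      have hig : i % g < g := Nat.mod_lt _ hgpos
      have h2 : i % g < (p.take g).length := by omega
      have h2' : i % g < p.length := by omega
      rw [List.getD_eq_getElem _ _ h2, List.getD_eq_getElem _ _ h2']
      exact List.getElem_take
    rw [h1]
    have h2 : pw (i % g + i / g * g) = pw (i % g) := period_mul hpwg _ _
    have h3 : i % g + i / g * g = i := by
      rw [Nat.mul_comm]; exact Nat.mod_add_div _ _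
    rw [h3] at h2
    have h4 : pw i = p.getD i 0 := by simp [hpw, Nat.mod_eq_of_lt hiL]
    have h5 : pw (i % g) = p.getD (i % g) 0 := by
      have : i % g < L := lt_trans (Nat.mod_lt _ hgpos) hglt
      simp [hpw, Nat.mod_eq_of_lt this]
    rw [← h4, h2, h5]

lemma fin_succ_of_no_between {n : ℕ} (π : Equiv.Perm (Fin n)) (i j : Fin n)
    (hab : π i < π j) (h : ∀ c : Fin n, ¬ (π i < π c ∧ π c < π j)) :
    (π i).val + 1 = (π j).val := by
  have h1 : (π i).val < (π j).val := hab
  have h2 : (π j).val < n := (π j).isLt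
  have hc : (π i).val + 1 < n := by omega
  obtain ⟨c, hcv⟩ := π.surjective ⟨(π i).val + 1, hc⟩
  have h3 := h c
  rw [hcv] at h3
  simp only [Fin.lt_def, Fin.val_mk] at h3
  omega

end Aux

set_option maxHeartbeats 2000000 in
/-- If `w = u p^{n-1} 0^∞` with `|u| = k-1`, `|p| = n-k`, `p` primitive, and
`π = Pat(w,Σ,n)` is defined, then `π(n) = π(k) - 1`. -/
theorem stmt12 {n k : ℕ} (hk1 : 1 ≤ k) (hk2 : k ≤ n - 1) (hn : 2 ≤ n)
    (u p : List ℕ) (hu : u.length = k - 1) (hp : p.length = n - k) (hprim : Primitive p)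
    (π : Equiv.Perm (Fin n)) (hPat : Pat (wordOf u p n) n π) :
    (π ⟨n - 1, by omega⟩).val + 1 = (π ⟨k - 1, by omega⟩).val := by
  set L := n - k with hLdef
  have hL1 : 1 ≤ L := by omega
  have hnk : n = k + L := by omega
  set pw : ℕ → ℕ := fun i => p.getD (i % L) 0 with hpw
  have hpwL : ∀ i, pw (i + L) = pw i := by
    intro i; simp [hpw, Nat.add_mod_right]
  have hA : (n-1) * L = (n-2) * L + L := by
    have e : n - 1 = (n - 2) + 1 := by omega
    rw [e]; ring
  have hn2L : n - 2 ≤ (n-2) * L := Nat.le_mul_of_pos_right _ (by omega)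
  -- formula for w
  have hw : ∀ m, wordOf u p n m =
      if m < k - 1 then u.getD m 0
      else if m - (k-1) < (n-1) * L then pw (m - (k-1)) else 0 := by
    intro m
    unfold wordOf
    rcases lt_or_ge m (k - 1) with h | h
    · rw [List.getD_append _ _ _ _ (by omega), if_pos h]
    · rw [List.getD_append_right _ _ _ _ (by omega), if_neg (by omega), hu,
        flat_replicate_getD, hp]
  set Y : ℕ → ℕ := fun m => if m < (n-1) * L then pw m else 0 with hYdef
  set X : ℕ → ℕ := fun m => if m < (n-2) * L then pw m else 0 with hXdef
  have hYm : ∀ m, Y m = if m < (n-1) * L then pw m else 0 := fun m => rfl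
  have hXm : ∀ m, X m = if m < (n-2) * L then pw m else 0 := fun m => rfl
  have hY : ∀ m, wordOf u p n (m + (k - 1)) = Y m := by
    intro m
    rw [hw, if_neg (by omega), hYm m, Nat.add_sub_cancel]
  have hX : ∀ m, wordOf u p n (m + (n - 1)) = X m := by
    intro m
    rw [hw, if_neg (by omega), hXm m]
    have e : m + (n - 1) - (k - 1) = m + L := by omega
    rw [e]
    by_cases h : m < (n-2) * L
    · rw [if_pos (by omega), if_pos h, hpwL]
    · rw [if_neg (by omega), if_neg h]
  -- p has a nonzero letter
  have hex : ∃ i, i < L ∧ p.getD i 0 ≠ 0 := by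
    by_contra hall
    push_neg at hall
    have hpw0 : ∀ i, pw i = 0 := fun i => hall (i % L) (Nat.mod_lt _ (by omega))
    have hXY : ∀ m, X m = Y m := by
      intro m
      rw [hXm, hYm]
      simp [hpw0]
    have hne : π ⟨n-1, by omega⟩ ≠ π ⟨k-1, by omega⟩ := by
      intro h
      have := π.injective h
      simp only [Fin.mk.injEq] at this
      omega
    rcases hne.lt_or_gt with h | h
    · have hlex := (hPat ⟨n-1, by omega⟩ ⟨k-1, by omega⟩).mpr h
      refine lexLt_not_of_eq ?_ hlex
      intro m
      show wordOf u p n (m + (n-1)) = wordOf u p n (m + (k-1))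
      rw [hY m, hX m, hXY m]
    · have hlex := (hPat ⟨k-1, by omega⟩ ⟨n-1, by omega⟩).mpr h
      refine lexLt_not_of_eq ?_ hlex
      intro m
      show wordOf u p n (m + (k-1)) = wordOf u p n (m + (n-1))
      rw [hY m, hX m, hXY m]
  set t := Nat.find hex with htdef
  obtain ⟨htL, htne⟩ : t < L ∧ p.getD t 0 ≠ 0 := Nat.find_spec hex
  have htmin : ∀ i, i < t → p.getD i 0 = 0 := by
    intro i hi
    have := Nat.find_min hex hi
    push_neg at this
    exact this (by omega)
  -- X and Y agree below (n-2)*L + t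
  have hagree : ∀ i, i < (n-2) * L + t → X i = Y i := by
    intro i hi
    by_cases h : i < (n-2) * L
    · rw [hXm, hYm, if_pos h, if_pos (by omega)]
    · have hdt : i - (n-2)*L < t := by omega
      have hmod : i % L = i - (n-2)*L := by
        conv_lhs => rw [show i = (i - (n-2)*L) + (n-2) * L by omega]
        rw [Nat.add_mul_mod_self_right]
        exact Nat.mod_eq_of_lt (by omega)
      have hpwi : pw i = 0 := by
        show p.getD (i % L) 0 = 0
        rw [hmod]
        exact htmin _ hdt
      rw [hXm, hYm, if_neg h, if_pos (by omega), hpwi]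
  -- X < Y lexicographically
  have hXYlex : LexLt X Y := by
    refine ⟨(n-2) * L + t, hagree, ?_⟩
    have h1 : X ((n-2)*L + t) = 0 := by
      rw [hXm, if_neg (by omega)]
    have h2 : Y ((n-2)*L + t) = p.getD t 0 := by
      rw [hYm, if_pos (by omega)]
      show p.getD (((n-2)*L + t) % L) 0 = p.getD t 0
      rw [Nat.add_comm ((n-2)*L) t, Nat.add_mul_mod_self_right, Nat.mod_eq_of_lt htL]
    rw [h1, h2]
    omega
  -- the key: no shift strictly between X and Y
  have between : ∀ j : Fin n,
      LexLt X (fun m => wordOf u p n (m + j.val)) →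
      LexLt (fun m => wordOf u p n (m + j.val)) Y → False := by
    intro j h1 h2
    set Z : ℕ → ℕ := fun m => wordOf u p n (m + j.val) with hZdef
    have hZm : ∀ m, Z m = wordOf u p n (m + j.val) := fun m => rfl
    have hsand : ∀ i, i < (n-2) * L + t → Z i = X i :=
      lexLt_sandwich h1 h2 hagree
    have hZpw : ∀ m, m < (n-2) * L → Z m = pw m := by
      intro m hm
      rw [hsand m (by omega), hXm, if_pos hm]
    have hjlt : j.val ≤ n - 1 := by omega
    rcases lt_or_ge j.val (k - 1) with hj | hj
    · -- case B : j < k-1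
      set r := k - 1 - j.val with hrdef
      have hr1 : 1 ≤ r := by omega
      have hrk : r ≤ k - 1 := by omega
      have hk2' : 2 ≤ k := by omega
      have hn3 : 3 ≤ n := by omega
      have hZB : ∀ m, r ≤ m → Z m =
          if m - r < (n-1) * L then pw (m - r) else 0 := by
        intro m hm
        rw [hZm, hw, if_neg (by omega)]
        have e : m + j.val - (k-1) = m - r := by omega
        rw [e]
      set s0 := r % L with hs0def
      have hrs0 : ∀ x, pw (x + r) = pw (x + s0) := by
        intro x
        have e : x + r = (x + s0) + (r / L) * L := by
          have := Nat.mod_add_div' r L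
          omega
        rw [e, period_mul hpwL]
      rcases Nat.eq_zero_or_pos s0 with hs0 | hs0
      · -- aligned case: Z extends Y, so Z > Y, contradiction
        have hLr : L ≤ r := Nat.le_of_dvd (by omega) (Nat.dvd_of_mod_eq_zero hs0)
        have hpwr : ∀ x, pw (x + r) = pw x := by
          intro x; rw [hrs0, hs0, Nat.add_zero]
        have hZall : ∀ m, m < r + (n-1) * L → Z m = pw m := by
          intro m hm
          rcases lt_or_ge m r with h | h
          · exact hZpw m (by omega)
          · rw [hZB m h, if_pos (by omega)]
            have h3 : pw ((m - r) + r) = pw (m - r) := hpwr _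
            rw [show (m - r) + r = m by omega] at h3
            rw [h3]
        have hYZlex : LexLt Y Z := by
          refine ⟨(n-1) * L + t, ?_, ?_⟩
          · intro i hi
            rcases lt_or_ge i ((n-1) * L) with h | h
            · rw [hYm, if_pos h, hZall i (by omega)]
            · have hdt : i - (n-1)*L < t := by omega
              have hmod : i % L = i - (n-1)*L := by
                conv_lhs => rw [show i = (i - (n-1)*L) + (n-1) * L by omega]
                rw [Nat.add_mul_mod_self_right]
                exact Nat.mod_eq_of_lt (by omega)
              rw [hYm, if_neg (by omega), hZall i (by omega)]
              show (0 : ℕ) = p.getD (i % L) 0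
              rw [hmod]
              exact (htmin _ hdt).symm
          · have hZv : Z ((n-1)*L + t) = p.getD t 0 := by
              rw [hZall _ (by omega)]
              show p.getD (((n-1)*L + t) % L) 0 = p.getD t 0
              rw [Nat.add_comm ((n-1)*L) t, Nat.add_mul_mod_self_right, Nat.mod_eq_of_lt htL]
            have hYv : Y ((n-1)*L + t) = 0 := by
              rw [hYm, if_neg (by omega)]
            rw [hZv, hYv]
            omega
        exact lexLt_asymm h2 hYZlex
      · -- unaligned case: p gets a nontrivial period, contradicting primitivity
        have hs0L : s0 < L := Nat.mod_lt _ (by omega)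
        have hL2 : 2 ≤ L := by omega
        have hrn3 : r ≤ n - 3 := by omega
        have hrange : r + L ≤ (n-2) * L := by
          have e : (n-2) * L = (n-3) * L + L := by
            rw [show n - 2 = (n-3) + 1 by omega]; ring
          have h2 : n - 3 ≤ (n-3) * L := Nat.le_mul_of_pos_right _ (by omega)
          omega
        have hper : ∀ m, m < L → pw (m + s0) = pw m := by
          intro m hm
          have h3 : Z (m + r) = pw (m + r) := hZpw _ (by omega)
          have h4 : Z (m + r) = pw m := by
            rw [hZB _ (by omega), if_pos (by omega)]
            congr 1
            omega
          rw [← hrs0, ← h3, h4]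
        apply not_primitive_of_shift p s0 hs0 (by omega) _ hprim
        intro m hm
        rw [hp] at hm ⊢
        have h5 := hper m hm
        show p.getD ((m + s0) % L) 0 = p.getD (m % L) 0
        exact h5
    · -- case A : j ≥ k-1
      set s := j.val - (k-1) with hsdef
      have hsL : s ≤ L := by omega
      have hZA : ∀ m, Z m = if m + s < (n-1) * L then pw (m + s) else 0 := by
        intro m
        rw [hZm, hw, if_neg (by omega)]
        have e : m + j.val - (k-1) = m + s := by omega
        rw [e]
      rcases Nat.eq_zero_or_pos s with hs | hs
      · -- Z = Y
        refine lexLt_not_of_eq (fun m => ?_) h2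
        rw [hZA, hs, Nat.add_zero, hYm]
      rcases eq_or_lt_of_le hsL with hseq | hslt
      · -- Z = X
        refine lexLt_not_of_eq (fun m => ?_) h1
        rw [hXm, hZA, hseq]
        by_cases h : m < (n-2) * L
        · rw [if_pos h, if_pos (show m + L < (n-1) * L by omega), hpwL]
        · rw [if_neg h, if_neg (show ¬ (m + L < (n-1) * L) by omega)]
      · -- 0 < s < L : period argument
        have hL2 : 2 ≤ L := by omega
        have hn3 : 3 ≤ n := by omega
        have hLle : L ≤ (n-2) * L := Nat.le_mul_of_pos_left _ (by omega)
        have hper : ∀ m, m < L → pw (m + s) = pw m := by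
          intro m hm
          have h3 : Z m = pw m := hZpw m (by omega)
          have h4 : Z m = pw (m + s) := by
            rw [hZA, if_pos (by omega)]
          rw [← h3, h4]
        apply not_primitive_of_shift p s hs (by omega) _ hprim
        intro m hm
        rw [hp] at hm ⊢
        have h5 := hper m hm
        show p.getD ((m + s) % L) 0 = p.getD (m % L) 0
        exact h5
  -- assemble
  have e1 : (fun m => wordOf u p n (m + ((⟨n-1, by omega⟩ : Fin n) : ℕ))) = X :=
    funext hX
  have e2 : (fun m => wordOf u p n (m + ((⟨k-1, by omega⟩ : Fin n) : ℕ))) = Y :=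
    funext hY
  have hab : π ⟨n-1, by omega⟩ < π ⟨k-1, by omega⟩ := by
    rw [← hPat ⟨n-1, by omega⟩ ⟨k-1, by omega⟩]
    rw [e1, e2]
    exact hXYlex
  have hnob : ∀ j : Fin n,
      ¬ (π ⟨n-1, by omega⟩ < π j ∧ π j < π ⟨k-1, by omega⟩) := by
    rintro j ⟨hj1, hj2⟩
    have l1 : LexLt X (fun m => wordOf u p n (m + j.val)) := by
      have := (hPat ⟨n-1, by omega⟩ j).mpr hj1
      rwa [e1] at this
    have l2 : LexLt (fun m => wordOf u p n (m + j.val)) Y := by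
      have := (hPat j ⟨k-1, by omega⟩).mpr hj2
      rwa [e2] at this
    exact between j l1 l2
  exact fin_succ_of_no_between π ⟨n-1, by omega⟩ ⟨k-1, by omega⟩ hab hnob
end

section
/- Let w = u p^{n−1} 0^∞ with u ∈ {0,...,N−1}^{n−t−1} and p ∈ {0,...,N−1}^t a primitive word, 1 ≤ t ≤ n−1. Then Pat(w, Σ, n) is defined (the first n shifts of w are pairwise distinct in lexicographic order) if and only if p ≠ 0 (p is not the single letter 0). -/
lemma lexLt_iff_toLex_lt (x y : ℕ → ℕ) : LexLt x y ↔ toLex x < toLex y := by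
  constructor
  · rintro ⟨k, h1, h2⟩
    exact ⟨k, fun j hj => h1 j hj, h2⟩
  · rintro ⟨k, h1, h2⟩
    exact ⟨k, fun j hj => h1 j hj, h2⟩

/-- If two distinct shifts of `wordOf u p n` coincide, the word is zero from
position `i` on. -/
lemma zero_of_shift_eq {u p : List ℕ} {n : ℕ} {i j : ℕ} (hij : i < j)
    (h : ∀ m, wordOf u p n (m + i) = wordOf u p n (m + j)) :
    ∀ k, i ≤ k → wordOf u p n k = 0 := by
  set w := wordOf u p n with hw
  set L := (u ++ (List.replicate (n - 1) p).flatten).length with hL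
  have hzero : ∀ k, L ≤ k → w k = 0 := by
    intro k hk
    exact List.getD_eq_default _ _ hk
  have hstep : ∀ k, i ≤ k → w k = w (k + (j - i)) := by
    intro k hk
    have := h (k - i)
    rwa [Nat.sub_add_cancel hk, show k - i + j = k + (j - i) by omega] at this
  have hiter : ∀ m k, i ≤ k → w k = w (k + m * (j - i)) := by
    intro m
    induction m with
    | zero => simp
    | succ m ih =>
      intro k hk
      rw [ih k hk, hstep (k + m * (j - i)) (by omega)]
      ring_nf
  intro k hk
  have hd : 1 ≤ j - i := by omega
  rw [hiter L k hk]
  exact hzero _ (by nlinarith)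

/-- Key combinatorial fact: if `p ≠ [0]` is primitive, all `n` first shifts of
`wordOf u p n` are pairwise distinct. -/
lemma shifts_ne {n t : ℕ} (ht1 : 1 ≤ t) (ht2 : t ≤ n - 1) (hn : 2 ≤ n)
    (u p : List ℕ) (hu : u.length = n - t - 1) (hp : p.length = t)
    (hprim : Primitive p) (hp0 : p ≠ [0]) {i j : ℕ} (hij : i < j) (hjn : j < n)
    (h : ∀ m, wordOf u p n (m + i) = wordOf u p n (m + j)) : False := by
  have hz := zero_of_shift_eq hij h
  -- the last copy of p starts at position u.length + (n-2)*t ≥ n-2 ≥ i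
  have hi : i ≤ n - 2 := by omega
  have hlast : ∀ m, m < t → p.getD m 0 = 0 := by
    intro m hm
    have hpos : i ≤ u.length + (n - 2) * t + m := by
      have : n - 2 ≤ (n - 2) * t := Nat.le_mul_of_pos_right _ ht1
      omega
    have := hz (u.length + (n - 2) * t + m) hpos
    rw [wordOf] at this
    -- rewrite replicate (n-1) p = replicate (n-2) p ++ [p]
    have hrep : List.replicate (n - 1) p = List.replicate (n - 2) p ++ [p] := by
      rw [← (List.replicate_succ' : List.replicate (n - 2 + 1) p = _)]
      congr 1
      omega
    rw [hrep, List.flatten_append, List.flatten_cons, List.flatten_nil,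
      List.append_nil, ← List.append_assoc] at this
    have hlen : (u ++ (List.replicate (n - 2) p).flatten).length = u.length + (n - 2) * t := by
      simp [List.length_flatten, List.map_replicate, List.sum_replicate, hp, mul_comm]
    rw [List.getD_eq_getElem?_getD, List.getElem?_append_right (by omega),
      show u.length + (n - 2) * t + m - (u ++ (List.replicate (n - 2) p).flatten).length = m
        by omega, ← List.getD_eq_getElem?_getD] at this
    exact this
  -- hence p = replicate t 0
  have hpr : p = List.replicate t 0 := by
    apply List.ext_getElem (by simp [hp])
    intro m h1 h2
    have := hlast m (by omega)
    rw [List.getD_eq_getElem?_getD, List.getElem?_eq_getElem h1] at this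
    simp at this ⊢
    exact this
  rcases eq_or_lt_of_le ht1 with h1 | h1
  · apply hp0; rw [hpr, ← h1]; rfl
  · apply hprim [0] t h1
    rw [hpr]
    clear hpr hlast
    induction t with
    | zero => rfl
    | succ t iht =>
      rcases Nat.eq_or_lt_of_le (Nat.one_le_iff_ne_zero.mpr (Nat.succ_ne_zero t)) with h2 | h2
      · simp [← h2]
      · simp [List.replicate_succ]

/-- For `w = u p^{n-1} 0^∞` with `p` primitive, `Pat(w,Σ,n)` is defined iff `p ≠ 0`
(the single letter 0). -/
theorem stmt13 {n N t : ℕ} (ht1 : 1 ≤ t) (ht2 : t ≤ n - 1) (hn : 2 ≤ n)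
    (u p : List ℕ) (hu : u.length = n - t - 1) (hp : p.length = t)
    (huN : ∀ x ∈ u, x < N) (hpN : ∀ x ∈ p, x < N) (hprim : Primitive p) :
    (∃ π : Equiv.Perm (Fin n), Pat (wordOf u p n) n π) ↔ p ≠ [0] := by
  constructor
  · rintro ⟨π, hπ⟩ rfl
    -- p = [0]: shifts n-2 and n-1 coincide (both all zero)
    have ht : t = 1 := by simpa using hp.symm
    have hzero : ∀ k, n - 2 ≤ k → wordOf u [0] n k = 0 := by
      intro k hk
      rw [wordOf]
      rcases le_or_gt (u ++ (List.replicate (n - 1) [0]).flatten).length k with h | h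
      · exact List.getD_eq_default _ _ h
      · rw [List.getD_eq_getElem?_getD, List.getElem?_eq_getElem h]
        have hul : u.length = n - 2 := by omega
        simp only [Option.getD_some]
        rw [List.getElem_append_right (by omega)]
        have : (List.replicate (n - 1) [0]).flatten = List.replicate (n - 1) (0 : ℕ) := by
          induction (n - 1) with
          | zero => rfl
          | succ m ih => simp [List.replicate_succ, ih]
        simp [this]
    set a : Fin n := ⟨n - 2, by omega⟩
    set b : Fin n := ⟨n - 1, by omega⟩
    have hab : a ≠ b := by
      simp only [a, b, Fin.mk.injEq, ne_eq]
      omega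
    have hsame : (fun m => wordOf u [0] n (m + a.val)) = (fun m => wordOf u [0] n (m + b.val)) := by
      funext m
      rw [hzero (m + a.val) (Nat.le_add_left _ m), hzero (m + b.val) (le_trans (by omega) (Nat.le_add_left (n-1) m))]
    have hnolt : ∀ x : ℕ → ℕ, ¬ LexLt x x := by
      rintro x ⟨k, _, hk⟩; exact lt_irrefl _ hk
    rcases lt_or_gt_of_ne (fun h => hab (π.injective h)) with hlt | hlt
    · exact hnolt _ (hsame ▸ (hπ a b).mpr hlt)
    · exact hnolt _ (hsame ▸ (hπ b a).mpr hlt)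
  · intro hp0
    -- shifts are pairwise distinct; sort them
    set g : Fin n → Lex (ℕ → ℕ) := fun i => toLex (fun m => wordOf u p n (m + i.val)) with hg
    have hginj : Function.Injective g := by
      intro i j hij
      by_contra hne
      have heq : ∀ m, wordOf u p n (m + i.val) = wordOf u p n (m + j.val) := by
        intro m
        exact congrFun (toLex.injective hij) m
      rcases lt_or_gt_of_ne (fun h : i.val = j.val => hne (Fin.ext h)) with h | h
      · exact shifts_ne ht1 ht2 hn u p hu hp hprim hp0 h j.isLt heq
      · exact shifts_ne ht1 ht2 hn u p hu hp hprim hp0 h i.isLt (fun m => (heq m).symm)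
    classical
    set s : Finset (Lex (ℕ → ℕ)) := Finset.univ.image g with hs
    have hcard : s.card = n := by
      rw [hs, Finset.card_image_of_injective _ hginj, Finset.card_univ, Fintype.card_fin]
    set e : Fin n → Fin n := fun i => (s.orderIsoOfFin hcard).symm ⟨g i, by
      simp [hs]⟩ with he
    have heinj : Function.Injective e := by
      intro i j hij
      apply hginj
      have := (s.orderIsoOfFin hcard).symm.injective hij
      exact congrArg Subtype.val this
    have hebij : Function.Bijective e := (Finite.injective_iff_bijective).mp heinj
    refine ⟨Equiv.ofBijective e hebij, ?_⟩
    intro i j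
    rw [lexLt_iff_toLex_lt]
    show g i < g j ↔ e i < e j
    exact (Subtype.mk_lt_mk (p := fun x => x ∈ s)).symm.trans
      (s.orderIsoOfFin hcard).symm.lt_iff_lt.symm
end

section
/- Let w = u p^{n−1} 0^∞ with p primitive, |u| = n−t−1, |p| = t ≥ 1, and suppose π = Pat(w, Σ, n) is defined. Then π(n) ≠ n. -/
/-- If `w = u p^{n-1} 0^∞` with `p` primitive, `|u| = n-t-1`, `|p| = t ≥ 1`, and
`π = Pat(w,Σ,n)` is defined, then `π(n) ≠ n`. -/
theorem stmt14 {n t : ℕ} (ht1 : 1 ≤ t) (ht2 : t ≤ n - 1) (hn : 2 ≤ n)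
    (u p : List ℕ) (hu : u.length = n - t - 1) (hp : p.length = t) (hprim : Primitive p)
    (π : Equiv.Perm (Fin n)) (hPat : Pat (wordOf u p n) n π) :
    (π ⟨n - 1, by omega⟩).val ≠ n - 1 := by
  intro hcontra
  set N := n - 1 with hN
  have hN1 : 1 ≤ N := le_trans ht1 ht2
  set P : List ℕ := (List.replicate N p).flatten with hP
  set Q : List ℕ := (List.replicate (N - 1) p).flatten with hQ
  have hPlen : P.length = N * t := by
    simp [hP, List.length_flatten, List.map_replicate, hp, Nat.mul_comm]
  have hQlen : Q.length = (N - 1) * t := by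
    simp [hQ, List.length_flatten, List.map_replicate, hp, Nat.mul_comm]
  have hPQ1 : P = p ++ Q := by
    rw [hP, hQ, ← Nat.succ_pred_eq_of_pos hN1, List.replicate_succ, List.flatten_cons]
    simp
  have hPQ2 : P = Q ++ p := by
    rw [hP, hQ, ← Nat.succ_pred_eq_of_pos hN1, List.replicate_succ',
      List.flatten_append, List.flatten_cons, List.flatten_nil, List.append_nil]
    simp
  have hulen : u.length = N - t := by omega
  -- the two shifts
  have hA : ∀ m, wordOf u p n (m + (N - t)) = P.getD m 0 := by
    intro m
    rw [wordOf, ← hN, ← hP, ← hulen]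
    rw [List.getD_append_right _ _ _ _ (by omega)]
    congr 1
    omega
  have hB : ∀ m, wordOf u p n (m + N) = P.getD (m + t) 0 := by
    intro m
    have : m + N = (m + t) + (N - t) := by omega
    rw [this, hA]
  -- periodicity on the common part
  have hC : ∀ m, m < (N - 1) * t → P.getD m 0 = P.getD (m + t) 0 := by
    intro m hm
    have h1 : P.getD m 0 = Q.getD m 0 := by
      rw [hPQ2, List.getD_append _ _ _ _ (by omega)]
    have h2 : P.getD (m + t) 0 = Q.getD m 0 := by
      rw [hPQ1, List.getD_append_right _ _ _ _ (by omega : p.length ≤ m + t)]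
      congr 1
      omega
    rw [h1, h2]
  have hD : ∀ m, (N - 1) * t ≤ m → P.getD (m + t) 0 = 0 := by
    intro m hm
    apply List.getD_eq_default
    rw [hPlen]
    have : (N - 1) * t + t = N * t := by
      rw [← Nat.succ_mul]
      congr 1
      omega
    omega
  -- the permutation argument
  set i : Fin n := ⟨N - t, by omega⟩ with hi
  set j : Fin n := ⟨N, by omega⟩ with hj
  have hij : i ≠ j := by
    simp only [hi, hj, ne_eq, Fin.mk.injEq]
    omega
  have hπij : π i < π j := by
    have hne : π i ≠ π j := fun h => hij (π.injective h)
    have hlt := (π i).isLt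
    rw [Fin.lt_iff_val_lt_val]
    have hjval : (π j).val = N := hcontra
    rw [hjval]
    rcases Nat.lt_or_ge (π i).val N with h | h
    · exact h
    · exfalso
      exact hne (Fin.ext (by omega))
  obtain ⟨k, hagree, hlt⟩ := (hPat i j).mpr hπij
  simp only [hi, hj] at hlt
  rw [hA, hB] at hlt
  rcases Nat.lt_or_ge k ((N - 1) * t) with h | h
  · rw [hC k h] at hlt
    exact lt_irrefl _ hlt
  · rw [hD k h] at hlt
    exact Nat.not_lt_zero _ hlt
end

section
/- Define the map Φ on marked n-cycles of the form π̂ = [⋆, 1, π̂(3), ..., π̂(n)] by Φ(π̂) = [π̂(3)−2, π̂(4)−2, ..., π̂(n)−2]. Then Φ is a well-defined bijection from E_n = {π̂ ∈ T_n : π̂ = [⋆, 1, ...]} onto T⁰_{n−2}, the set of sequences obtained from (n−2)-cycles in one-line notation by replacing one entry with 0; moreover Φ preserves the number of descents (where descents of an element of T⁰_{n−2} count all positions including those involving the 0 entry, and descents of π̂ ∈ E_n are computed after deleting the ⋆). -/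
open Equiv Equiv.Perm

namespace Stmt19Aux

variable {n : ℕ}

def f0 (hn : 3 ≤ n) : Fin n := ⟨0, Nat.lt_of_lt_of_le (by decide) hn⟩
def f1 (hn : 3 ≤ n) : Fin n := ⟨1, Nat.lt_of_lt_of_le (by decide) hn⟩
def e (hn : 3 ≤ n) (i : Fin (n - 2)) : Fin n := ⟨i.val + 2, Nat.add_lt_of_lt_sub i.isLt⟩
def d2 (hn : 3 ≤ n) (x : Fin n) : Fin (n - 2) := ⟨x.val - 2, by have := x.isLt; omega⟩

lemma f0_val (hn : 3 ≤ n) : (f0 hn).val = 0 := rfl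
lemma f1_val (hn : 3 ≤ n) : (f1 hn).val = 1 := rfl
lemma e_val (hn : 3 ≤ n) (i : Fin (n - 2)) : (e hn i).val = i.val + 2 := rfl
lemma d2_val (hn : 3 ≤ n) (x : Fin n) : (d2 hn x).val = x.val - 2 := rfl

lemma e_d2 (hn : 3 ≤ n) (x : Fin n) (hx : 2 ≤ x.val) : e hn (d2 hn x) = x :=
  Fin.ext (by rw [e_val, d2_val]; omega)

lemma d2_e (hn : 3 ≤ n) (i : Fin (n - 2)) : d2 hn (e hn i) = i :=
  Fin.ext (by rw [d2_val, e_val]; omega)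

lemma e_inj (hn : 3 ≤ n) : Function.Injective (e hn) := fun i j h => by
  have := congrArg Fin.val h
  rw [e_val, e_val] at this
  exact Fin.ext (by omega)

lemma e_ne_f0 (hn : 3 ≤ n) (i : Fin (n - 2)) : e hn i ≠ f0 hn := by
  intro h; have := congrArg Fin.val h; rw [e_val, f0_val] at this; omega

lemma e_ne_f1 (hn : 3 ≤ n) (i : Fin (n - 2)) : e hn i ≠ f1 hn := by
  intro h; have := congrArg Fin.val h; rw [e_val, f1_val] at this; omega

lemma f0_ne_f1 (hn : 3 ≤ n) : f0 hn ≠ f1 hn := by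
  intro h; have := congrArg Fin.val h; rw [f0_val, f1_val] at this; omega

lemma cases3 (hn : 3 ≤ n) (x : Fin n) :
    x = f0 hn ∨ x = f1 hn ∨ (2 ≤ x.val ∧ e hn (d2 hn x) = x) := by
  rcases (by omega : x.val = 0 ∨ x.val = 1 ∨ 2 ≤ x.val) with h | h | h
  · left; exact Fin.ext h
  · right; left; exact Fin.ext h
  · right; right; exact ⟨h, e_d2 hn x h⟩

def Rel (hn : 3 ≤ n) (σ : Perm (Fin n)) (τ : Perm (Fin (n - 2))) : Prop :=
  ∀ i, e hn (τ i) = if σ (e hn i) = f1 hn then σ (f0 hn) else σ (e hn i)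

variable {σ : Perm (Fin n)} {τ : Perm (Fin (n - 2))}

lemma sc_self_apply {α : Type*} (f : Perm α) (x : α) : f.SameCycle x (f x) :=
  sameCycle_apply_right.2 (SameCycle.refl _ _)

lemma step (hn : 3 ≤ n) (hrel : Rel hn σ τ) (i : Fin (n - 2)) :
    e hn (τ i) = σ (e hn i) ∨
      (σ (e hn i) = f1 hn ∧ e hn (τ i) = σ (f0 hn)) := by
  have h := hrel i
  by_cases hc : σ (e hn i) = f1 hn
  · right; rw [if_pos hc] at h; exact ⟨hc, h⟩
  · left; rw [if_neg hc] at h; exact h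

lemma key_contract (hn : 3 ≤ n) (hσ1 : σ (f1 hn) = f0 hn) (hrel : Rel hn σ τ) :
    ∀ k : ℕ, ∀ i j : Fin (n - 2), (σ ^ k) (e hn i) = e hn j → τ.SameCycle i j := by
  intro k
  induction k using Nat.strong_induction_on with
  | _ k IH =>
    intro i j hk
    rcases Nat.eq_zero_or_pos k with rfl | hk0
    · rw [pow_zero, one_apply] at hk
      rw [e_inj hn hk]
    obtain ⟨k1, rfl⟩ : ∃ k1, k = k1 + 1 := ⟨k - 1, by omega⟩
    rw [pow_succ, mul_apply] at hk
    rcases step hn hrel i with hA | ⟨hB1, hB2⟩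
    · rw [← hA] at hk
      exact SameCycle.trans (sc_self_apply τ i) (IH k1 (by omega) _ _ hk)
    · rw [hB1] at hk
      rcases Nat.eq_zero_or_pos k1 with rfl | h1
      · rw [pow_zero, one_apply] at hk
        exact absurd hk.symm (e_ne_f1 hn j)
      obtain ⟨k2, rfl⟩ : ∃ k2, k1 = k2 + 1 := ⟨k1 - 1, by omega⟩
      rw [pow_succ, mul_apply, hσ1] at hk
      rcases Nat.eq_zero_or_pos k2 with rfl | h2
      · rw [pow_zero, one_apply] at hk
        exact absurd hk.symm (e_ne_f0 hn j)
      obtain ⟨k3, rfl⟩ : ∃ k3, k2 = k3 + 1 := ⟨k2 - 1, by omega⟩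
      rw [pow_succ, mul_apply, ← hB2] at hk
      exact SameCycle.trans (sc_self_apply τ i) (IH k3 (by omega) _ _ hk)

lemma contract (hn : 3 ≤ n) (hσ1 : σ (f1 hn) = f0 hn) (hrel : Rel hn σ τ)
    (hσ : σ.IsCycleOn Set.univ) : τ.IsCycleOn Set.univ := by
  refine ⟨τ.bijective.bijOn_univ, fun x _ y _ => ?_⟩
  obtain ⟨k, -, hk⟩ :=
    (hσ.2 (Set.mem_univ (e hn x)) (Set.mem_univ (e hn y))).exists_pow_eq'
  exact key_contract hn hσ1 hrel k x y hk

lemma expand (hn : 3 ≤ n) (hσ1 : σ (f1 hn) = f0 hn) (hrel : Rel hn σ τ)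
    (hσ0 : 2 ≤ (σ (f0 hn)).val) (hτ : τ.IsCycleOn Set.univ) :
    σ.IsCycleOn Set.univ := by
  have hstep : ∀ i, σ.SameCycle (e hn i) (e hn (τ i)) := by
    intro i
    rcases step hn hrel i with hA | ⟨hB1, hB2⟩
    · rw [hA]; exact sc_self_apply σ _
    · rw [hB2]
      refine sameCycle_apply_right.2 ?_
      rw [← hσ1]
      refine sameCycle_apply_right.2 ?_
      rw [← hB1]
      exact sc_self_apply σ _
  have hiter : ∀ (k : ℕ) (i), σ.SameCycle (e hn i) (e hn ((τ ^ k) i)) := by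
    intro k i
    induction k with
    | zero => rw [pow_zero, one_apply]
    | succ k ih =>
      rw [pow_succ', mul_apply]
      exact ih.trans (hstep _)
  have htot : ∀ i j, σ.SameCycle (e hn i) (e hn j) := by
    intro i j
    obtain ⟨k, -, hk⟩ := (hτ.2 (Set.mem_univ i) (Set.mem_univ j)).exists_pow_eq'
    rw [← hk]; exact hiter k i
  have hreach : ∀ x : Fin n, ∃ i, σ.SameCycle x (e hn i) := by
    intro x
    by_cases h2 : 2 ≤ x.val
    · exact ⟨d2 hn x, by rw [e_d2 hn x h2]⟩
    · refine ⟨d2 hn (σ (f0 hn)), ?_⟩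
      rw [e_d2 hn _ hσ0]
      rcases (by omega : x.val = 0 ∨ x.val = 1) with hx | hx
      · have hx0 : x = f0 hn := Fin.ext hx
        rw [hx0]
        exact sc_self_apply σ _
      · have hx1 : x = f1 hn := Fin.ext hx
        rw [hx1, ← hσ1]
        exact sameCycle_apply_right.2 (sc_self_apply σ _)
  refine ⟨σ.bijective.bijOn_univ, fun x _ y _ => ?_⟩
  obtain ⟨i, hi⟩ := hreach x
  obtain ⟨j, hj⟩ := hreach y
  exact (hi.trans (htot i j)).trans hj.symm

lemma sigma_ne_f0 (hn : 3 ≤ n) (hσ1 : σ (f1 hn) = f0 hn) {x : Fin n} (hx : x ≠ f1 hn) :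
    σ x ≠ f0 hn := fun h => hx (σ.injective (h.trans hσ1.symm))

lemma sigma_e_ne_f0 (hn : 3 ≤ n) (hσ1 : σ (f1 hn) = f0 hn) (i : Fin (n - 2)) :
    σ (e hn i) ≠ f0 hn := sigma_ne_f0 hn hσ1 (e_ne_f1 hn i)

lemma sigma_e_val_pos (hn : 3 ≤ n) (hσ1 : σ (f1 hn) = f0 hn) (i : Fin (n - 2)) :
    1 ≤ (σ (e hn i)).val := by
  rcases Nat.eq_zero_or_pos (σ (e hn i)).val with h | h
  · exact absurd (Fin.ext (h.trans (f0_val hn).symm)) (sigma_e_ne_f0 hn hσ1 i)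
  · exact h

lemma sigma_f0_ne_f0 (hn : 3 ≤ n) (hσ1 : σ (f1 hn) = f0 hn) : σ (f0 hn) ≠ f0 hn := fun h =>
  f0_ne_f1 hn (σ.injective (h.trans hσ1.symm))

lemma sigma_f0_ne_f1 (hn : 3 ≤ n) (hσ1 : σ (f1 hn) = f0 hn)
    (hσ : σ.IsCycleOn Set.univ) : σ (f0 hn) ≠ f1 hn := by
  intro h
  have hz : (0 : ℕ) < n - 2 := by omega
  have horb : ∀ k : ℕ, (σ ^ k) (f0 hn) = f0 hn ∨ (σ ^ k) (f0 hn) = f1 hn := by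
    intro k
    induction k with
    | zero => left; rw [pow_zero, one_apply]
    | succ k ih =>
      rw [pow_succ', mul_apply]
      rcases ih with h' | h'
      · right; rw [h', h]
      · left; rw [h', hσ1]
  obtain ⟨k, -, hk⟩ :=
    (hσ.2 (Set.mem_univ (f0 hn)) (Set.mem_univ (e hn ⟨0, hz⟩))).exists_pow_eq'
  rcases horb k with h' | h'
  · exact e_ne_f0 hn ⟨0, hz⟩ ((h'.symm.trans hk).symm)
  · exact e_ne_f1 hn ⟨0, hz⟩ ((h'.symm.trans hk).symm)

lemma sigma_f0_val_ge (hn : 3 ≤ n) (hσ1 : σ (f1 hn) = f0 hn)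
    (hσ : σ.IsCycleOn Set.univ) : 2 ≤ (σ (f0 hn)).val := by
  have h0 := sigma_f0_ne_f0 hn hσ1
  have h1 := sigma_f0_ne_f1 hn hσ1 hσ
  rcases (by omega : 2 ≤ (σ (f0 hn)).val ∨ (σ (f0 hn)).val = 0 ∨ (σ (f0 hn)).val = 1)
    with h | h | h
  · exact h
  · exact absurd (Fin.ext (h.trans (f0_val hn).symm)) h0
  · exact absurd (Fin.ext (h.trans (f1_val hn).symm)) h1

lemma forward (hn : 3 ≤ n) (hσ1 : σ (f1 hn) = f0 hn) (hσ : σ.IsCycleOn Set.univ) :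
    ∃ (τ : Perm (Fin (n - 2))) (i0 : Fin (n - 2)), τ.IsCycleOn Set.univ ∧
      ∀ i, (σ (e hn i)).val - 1 = if i = i0 then 0 else (τ i).val + 1 := by
  have hσ0 := sigma_f0_val_ge hn hσ1 hσ
  obtain ⟨x, hx⟩ : ∃ x, σ x = f1 hn := ⟨σ.symm (f1 hn), σ.apply_symm_apply _⟩
  have hx1 : x ≠ f1 hn := fun h => by rw [h, hσ1] at hx; exact f0_ne_f1 hn hx
  have hx0 : x ≠ f0 hn := fun h => by rw [h] at hx; exact sigma_f0_ne_f1 hn hσ1 hσ hx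
  have hx2 : 2 ≤ x.val := by
    have h0 : x.val ≠ 0 := fun h => hx0 (Fin.ext h)
    have h1 : x.val ≠ 1 := fun h => hx1 (Fin.ext h)
    omega
  have hei0 : e hn (d2 hn x) = x := e_d2 hn x hx2
  have hiff : ∀ i, σ (e hn i) = f1 hn ↔ i = d2 hn x := by
    intro i
    constructor
    · intro h
      have h2 := σ.injective (h.trans hx.symm)
      rw [← hei0] at h2
      exact e_inj hn h2
    · intro h
      rw [h, hei0, hx]
  have hval2 : ∀ i, i ≠ d2 hn x → 2 ≤ (σ (e hn i)).val := by
    intro i hi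
    have hne1 : σ (e hn i) ≠ f1 hn := fun h => hi ((hiff i).1 h)
    have hne0 := sigma_e_ne_f0 hn hσ1 i
    have h0 : (σ (e hn i)).val ≠ 0 := fun h => hne0 (Fin.ext h)
    have h1 : (σ (e hn i)).val ≠ 1 := fun h => hne1 (Fin.ext h)
    omega
  have hinj : Function.Injective (fun i =>
      if σ (e hn i) = f1 hn then d2 hn (σ (f0 hn)) else d2 hn (σ (e hn i))) := by
    intro a b hab
    simp only at hab
    by_cases ha : σ (e hn a) = f1 hn <;> by_cases hb : σ (e hn b) = f1 hn
    · rw [(hiff a).1 ha, (hiff b).1 hb]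
    · rw [if_pos ha, if_neg hb] at hab
      have := congrArg Fin.val hab
      rw [d2_val, d2_val] at this
      have h2b := hval2 b (fun h => hb ((hiff b).2 h))
      have : (σ (f0 hn)).val = (σ (e hn b)).val := by omega
      exact absurd (σ.injective (Fin.ext this)).symm (e_ne_f0 hn b)
    · rw [if_neg ha, if_pos hb] at hab
      have := congrArg Fin.val hab
      rw [d2_val, d2_val] at this
      have h2a := hval2 a (fun h => ha ((hiff a).2 h))
      have : (σ (e hn a)).val = (σ (f0 hn)).val := by omega
      exact absurd (σ.injective (Fin.ext this)) (e_ne_f0 hn a)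
    · rw [if_neg ha, if_neg hb] at hab
      have := congrArg Fin.val hab
      rw [d2_val, d2_val] at this
      have h2a := hval2 a (fun h => ha ((hiff a).2 h))
      have h2b := hval2 b (fun h => hb ((hiff b).2 h))
      have : (σ (e hn a)).val = (σ (e hn b)).val := by omega
      exact e_inj hn (σ.injective (Fin.ext this))
  set τ : Perm (Fin (n - 2)) :=
    Equiv.ofBijective _ (Finite.injective_iff_bijective.1 hinj) with hτdef
  have hτapp : ∀ i, τ i =
      if σ (e hn i) = f1 hn then d2 hn (σ (f0 hn)) else d2 hn (σ (e hn i)) := fun i => rfl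
  have hrel : Rel hn σ τ := by
    intro i
    rw [hτapp i]
    by_cases hc : σ (e hn i) = f1 hn
    · rw [if_pos hc, if_pos hc, e_d2 hn _ hσ0]
    · rw [if_neg hc, if_neg hc, e_d2 hn _ (hval2 i (fun h => hc ((hiff i).2 h)))]
  refine ⟨τ, d2 hn x, contract hn hσ1 hrel hσ, fun i => ?_⟩
  by_cases hc : i = d2 hn x
  · rw [if_pos hc, (hiff i).2 hc, f1_val]
  · rw [if_neg hc, hτapp i, if_neg (fun h => hc ((hiff i).1 h)), d2_val]
    have := hval2 i hc
    omega

lemma backward (hn : 3 ≤ n) (τ : Perm (Fin (n - 2))) (i0 : Fin (n - 2))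
    (hτ : τ.IsCycleOn Set.univ) :
    ∃ σ : Perm (Fin n), σ (f1 hn) = f0 hn ∧ σ.IsCycleOn Set.univ ∧
      ∀ i, (σ (e hn i)).val - 1 = if i = i0 then 0 else (τ i).val + 1 := by
  have hinj : Function.Injective (fun x : Fin n =>
      if 2 ≤ x.val then (if d2 hn x = i0 then f1 hn else e hn (τ (d2 hn x)))
      else (if x.val = 1 then f0 hn else e hn (τ i0))) := by
    intro a b hab
    simp only at hab
    by_cases ha2 : 2 ≤ a.val <;> by_cases hb2 : 2 ≤ b.val
    · rw [if_pos ha2, if_pos hb2] at hab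
      by_cases hai : d2 hn a = i0 <;> by_cases hbi : d2 hn b = i0
      · have : (d2 hn a).val = (d2 hn b).val := by rw [hai, hbi]
        rw [d2_val, d2_val] at this
        exact Fin.ext (by omega)
      · rw [if_pos hai, if_neg hbi] at hab
        exact absurd hab.symm (e_ne_f1 hn _)
      · rw [if_neg hai, if_pos hbi] at hab
        exact absurd hab (e_ne_f1 hn _)
      · rw [if_neg hai, if_neg hbi] at hab
        have := congrArg Fin.val (τ.injective (e_inj hn hab))
        rw [d2_val, d2_val] at this
        exact Fin.ext (by omega)
    · rw [if_pos ha2, if_neg hb2] at hab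
      by_cases hai : d2 hn a = i0 <;> by_cases hb1 : b.val = 1
      · rw [if_pos hai, if_pos hb1] at hab
        exact absurd hab (f0_ne_f1 hn).symm
      · rw [if_pos hai, if_neg hb1] at hab
        exact absurd hab.symm (e_ne_f1 hn _)
      · rw [if_neg hai, if_pos hb1] at hab
        exact absurd hab (e_ne_f0 hn _)
      · rw [if_neg hai, if_neg hb1] at hab
        exact absurd (τ.injective (e_inj hn hab)) hai
    · rw [if_neg ha2, if_pos hb2] at hab
      by_cases ha1 : a.val = 1 <;> by_cases hbi : d2 hn b = i0
      · rw [if_pos ha1, if_pos hbi] at hab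
        exact absurd hab (f0_ne_f1 hn)
      · rw [if_pos ha1, if_neg hbi] at hab
        exact absurd hab.symm (e_ne_f0 hn _)
      · rw [if_neg ha1, if_pos hbi] at hab
        exact absurd hab (e_ne_f1 hn _)
      · rw [if_neg ha1, if_neg hbi] at hab
        exact absurd (τ.injective (e_inj hn hab)).symm hbi
    · rw [if_neg ha2, if_neg hb2] at hab
      by_cases ha1 : a.val = 1 <;> by_cases hb1 : b.val = 1
      · exact Fin.ext (ha1.trans hb1.symm)
      · rw [if_pos ha1, if_neg hb1] at hab
        exact absurd hab.symm (e_ne_f0 hn _)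
      · rw [if_neg ha1, if_pos hb1] at hab
        exact absurd hab (e_ne_f0 hn _)
      · exact Fin.ext (by omega)
  set σ : Perm (Fin n) :=
    Equiv.ofBijective _ (Finite.injective_iff_bijective.1 hinj) with hσdef
  have hσapp : ∀ x, σ x =
      if 2 ≤ x.val then (if d2 hn x = i0 then f1 hn else e hn (τ (d2 hn x)))
      else (if x.val = 1 then f0 hn else e hn (τ i0)) := fun x => rfl
  have hσ1 : σ (f1 hn) = f0 hn := by
    rw [hσapp, f1_val]
    norm_num
  have hσ0 : σ (f0 hn) = e hn (τ i0) := by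
    rw [hσapp, f0_val]
    norm_num
  have hσe : ∀ i, σ (e hn i) = if i = i0 then f1 hn else e hn (τ i) := by
    intro i
    have h2 : 2 ≤ (e hn i).val := by rw [e_val]; omega
    rw [hσapp, if_pos h2, d2_e]
  have hrel : Rel hn σ τ := by
    intro i
    by_cases hc : i = i0
    · rw [hσe i, if_pos hc, if_pos rfl, hσ0, hc]
    · rw [hσe i, if_neg hc, if_neg (e_ne_f1 hn _)]
  have hσ0v : 2 ≤ (σ (f0 hn)).val := by rw [hσ0, e_val]; omega
  refine ⟨σ, hσ1, expand hn hσ1 hrel hσ0v hτ, fun i => ?_⟩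
  by_cases hc : i = i0
  · rw [if_pos hc, hσe i, if_pos hc, f1_val]
  · rw [if_neg hc, hσe i, if_neg hc, e_val]
    omega

lemma inj_core (hn : 3 ≤ n) {σ σ' : Perm (Fin n)}
    (hσ1 : σ (f1 hn) = f0 hn) (hσ1' : σ' (f1 hn) = f0 hn)
    (h : ∀ i, (σ (e hn i)).val - 1 = (σ' (e hn i)).val - 1) : σ = σ' := by
  have he : ∀ i, σ (e hn i) = σ' (e hn i) := by
    intro i
    have h1 := sigma_e_val_pos hn hσ1 i
    have h2 := sigma_e_val_pos hn hσ1' i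
    exact Fin.ext (by have := h i; omega)
  have hf0 : σ (f0 hn) = σ' (f0 hn) := by
    obtain ⟨y, hy⟩ : ∃ y, σ y = σ' (f0 hn) := ⟨σ.symm _, σ.apply_symm_apply _⟩
    rcases cases3 hn y with rfl | rfl | ⟨h2, hey⟩
    · exact hy
    · rw [hσ1] at hy
      exact absurd hy.symm (sigma_f0_ne_f0 hn hσ1')
    · rw [← hey, he (d2 hn y)] at hy
      exact absurd (σ'.injective hy) (e_ne_f0 hn _)
  refine Equiv.ext fun x => ?_
  rcases cases3 hn x with rfl | rfl | ⟨h2, hex⟩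
  · exact hf0
  · exact hσ1.trans hσ1'.symm
  · rw [← hex]
    exact he _

lemma descent_core (hn : 3 ≤ n) (hσ1 : σ (f1 hn) = f0 hn)
    (s : Fin n → Fin n) (hs : ∀ a, (s a).val = (a.val + 1) % n)
    (s2 : Fin (n - 2) → Fin (n - 2)) (hs2 : ∀ a, (s2 a).val = (a.val + 1) % (n - 2))
    (Φf : Fin (n - 2) → ℕ) (hΦf : ∀ i, Φf i = (σ (e hn i)).val - 1) :
    (Finset.univ.filter (fun i : Fin n =>
        1 ≤ i.val ∧ i.val + 1 < n ∧ σ (s i) < σ i)).card =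
    (Finset.univ.filter (fun i : Fin (n - 2) =>
        i.val + 1 < n - 2 ∧ Φf (s2 i) < Φf i)).card := by
  have hsv : ∀ a : Fin n, a.val + 1 < n → (s a).val = a.val + 1 := by
    intro a ha
    rw [hs a, Nat.mod_eq_of_lt ha]
  have hs2v : ∀ a : Fin (n - 2), a.val + 1 < n - 2 → (s2 a).val = a.val + 1 := by
    intro a ha
    rw [hs2 a, Nat.mod_eq_of_lt ha]
  refine Finset.card_nbij' (fun a => d2 hn a) (fun b => e hn b) ?_ ?_ ?_ ?_
  · intro a ha
    rw [Finset.mem_coe, Finset.mem_filter] at ha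
    obtain ⟨-, h1, hlt, hdes⟩ := ha
    show d2 hn a ∈ _
    -- a.val ≥ 2
    have h2 : 2 ≤ a.val := by
      rcases (by omega : a.val = 1 ∨ 2 ≤ a.val) with h | h
      · exfalso
        have ha1 : a = f1 hn := Fin.ext h
        rw [ha1, hσ1] at hdes
        rw [Fin.lt_def, f0_val] at hdes
        omega
      · exact h
    rw [Finset.mem_coe, Finset.mem_filter]
    have hd2 : (d2 hn a).val = a.val - 2 := d2_val hn a
    refine ⟨Finset.mem_univ _, by omega, ?_⟩
    have hsd2 : (s2 (d2 hn a)).val = a.val - 1 := by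
      rw [hs2v (d2 hn a) (by omega), hd2]
      omega
    have he1 : e hn (s2 (d2 hn a)) = s a := by
      refine Fin.ext ?_
      rw [e_val, hsd2, hsv a hlt]
      omega
    have he2 : e hn (d2 hn a) = a := e_d2 hn a h2
    rw [hΦf, hΦf, he1, he2]
    have hp : 1 ≤ (σ (s a)).val := by
      have hne : s a ≠ f1 hn := by
        intro hcon
        have := congrArg Fin.val hcon
        rw [hsv a hlt, f1_val] at this
        omega
      have := sigma_ne_f0 hn hσ1 hne
      rcases Nat.eq_zero_or_pos (σ (s a)).val with hz | hz
      · exact absurd (Fin.ext (hz.trans (f0_val hn).symm)) this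
      · exact hz
    rw [Fin.lt_def] at hdes
    omega
  · intro b hb
    rw [Finset.mem_coe, Finset.mem_filter] at hb
    obtain ⟨-, hlt, hdes⟩ := hb
    show e hn b ∈ _
    rw [Finset.mem_coe, Finset.mem_filter]
    have hev : (e hn b).val = b.val + 2 := e_val hn b
    refine ⟨Finset.mem_univ _, by rw [e_val]; omega, by rw [e_val]; omega, ?_⟩
    have hse : s (e hn b) = e hn (s2 b) := by
      refine Fin.ext ?_
      rw [hsv (e hn b) (by rw [e_val]; omega), hev, e_val hn (s2 b), hs2v b hlt]
    rw [hΦf, hΦf] at hdes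
    have h1 := sigma_e_val_pos hn hσ1 (s2 b)
    have h2 := sigma_e_val_pos hn hσ1 b
    rw [Fin.lt_def, hse]
    omega
  · intro a ha
    rw [Finset.mem_coe, Finset.mem_filter] at ha
    obtain ⟨-, h1, hlt, hdes⟩ := ha
    have h2 : 2 ≤ a.val := by
      rcases (by omega : a.val = 1 ∨ 2 ≤ a.val) with h | h
      · exfalso
        have ha1 : a = f1 hn := Fin.ext h
        rw [ha1, hσ1] at hdes
        rw [Fin.lt_def, f0_val] at hdes
        omega
      · exact h
    exact e_d2 hn a h2
  · intro b _
    exact d2_e hn b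

end Stmt19Aux


/-- `Φ` is a descent-preserving bijection from
`E_n = {marked n-cycles of the form [⋆,1,…]}` onto `T⁰_{n-2}` (one-line notations
of `(n-2)`-cycles with one entry replaced by `0`).

0-indexed conventions: an element of `E_n` is an `n`-cycle `σ` on `Fin n` (i.e. a
permutation that is a cycle on all of `Fin n`) with `σ(1) = 0` (1-indexed:
`σ(2) = 1`), the mark sitting at position `0`; its one-line notation is
`[⋆, 1, σ(3), …, σ(n)]` (1-indexed).  `Φ σ = [σ(3)-2, …, σ(n)-2]` is realized on
0-indexed values as `i ↦ σ(i+2) - 1` (in `ℕ`; 1-indexed entry `v+1` becomes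
`v+1-2 = v-1`, with entry `2` becoming `0`).  `T⁰_m` consists of functions
`Fin m → ℕ` equal to the one-line notation of an `m`-cycle `τ` (entry at `i`
being `τ(i)+1 ∈ {1,…,m}`) with exactly one entry replaced by `0`.  Descents on
the `E_n` side are those of the star-deleted sequence `[1, σ(3), …, σ(n)]`;
`s` and `s2` are the cyclic successor maps (agreeing with the genuine successor
under the stated guards). -/
theorem stmt19 {n : ℕ} (hn : 3 ≤ n)
    (E : Set (Equiv.Perm (Fin n)))
    (hE : E = {σ | σ.IsCycleOn Set.univ ∧ σ ⟨1, by omega⟩ = ⟨0, by omega⟩})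
    (T0 : Set (Fin (n - 2) → ℕ))
    (hT0 : T0 = {f | ∃ (τ : Equiv.Perm (Fin (n - 2))) (i0 : Fin (n - 2)),
        τ.IsCycleOn Set.univ ∧ ∀ i, f i = if i = i0 then 0 else (τ i).val + 1})
    (Φ : Equiv.Perm (Fin n) → (Fin (n - 2) → ℕ))
    (hΦ : ∀ σ i, Φ σ i = (σ ⟨i.val + 2, by have := i.isLt; omega⟩).val - 1)
    (s : Fin n → Fin n) (hs : ∀ a, (s a).val = (a.val + 1) % n)
    (s2 : Fin (n - 2) → Fin (n - 2)) (hs2 : ∀ a, (s2 a).val = (a.val + 1) % (n - 2)) :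
    Set.BijOn Φ E T0 ∧
    ∀ σ ∈ E,
      (Finset.univ.filter (fun i : Fin n =>
          1 ≤ i.val ∧ i.val + 1 < n ∧ σ (s i) < σ i)).card =
      (Finset.univ.filter (fun i : Fin (n - 2) =>
          i.val + 1 < n - 2 ∧ Φ σ (s2 i) < Φ σ i)).card := by
  subst hE hT0
  constructor
  · refine ⟨?_, ?_, ?_⟩
    · -- MapsTo
      intro σ hσm
      obtain ⟨hcyc, hσ1'⟩ := hσm
      have hσ1 : σ (Stmt19Aux.f1 hn) = Stmt19Aux.f0 hn := hσ1'
      obtain ⟨τ, i0, hτcyc, hval⟩ := Stmt19Aux.forward hn hσ1 hcyc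
      exact ⟨τ, i0, hτcyc, fun i => by rw [hΦ σ i]; exact hval i⟩
    · -- InjOn
      intro σ hσm σ' hσ'm h
      have hσ1 : σ (Stmt19Aux.f1 hn) = Stmt19Aux.f0 hn := hσm.2
      have hσ1' : σ' (Stmt19Aux.f1 hn) = Stmt19Aux.f0 hn := hσ'm.2
      refine Stmt19Aux.inj_core hn hσ1 hσ1' (fun i => ?_)
      have := congrFun h i
      rwa [hΦ σ i, hΦ σ' i] at this
    · -- SurjOn
      intro f hf
      obtain ⟨τ, i0, hτcyc, hfval⟩ := hf
      obtain ⟨σ, hσ1, hcyc, hval⟩ := Stmt19Aux.backward hn τ i0 hτcyc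
      refine ⟨σ, ⟨hcyc, hσ1⟩, funext fun i => ?_⟩
      rw [hΦ σ i, hfval i]
      exact hval i
  · intro σ hσm
    have hσ1 : σ (Stmt19Aux.f1 hn) = Stmt19Aux.f0 hn := hσm.2
    exact Stmt19Aux.descent_core hn hσ1 s hs s2 hs2 (Φ σ) (fun i => hΦ σ i)
end
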